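/- Let μ, μ' ∈ ℝ with Δ = |μ − μ'| > 0, let σ > 0 and ε ≥ 0, and let γ_μ, γ_{μ'} denote the Gaussian distributions N(μ, σ²) and N(μ', σ²) on ℝ. Then sup over measurable sets S ⊆ ℝ of γ_μ(S) − e^ε γ_{μ'}(S) equals Φ(Δ/(2σ) − εσ/Δ) − e^ε Φ(−Δ/(2σ) − εσ/Δ), where Φ is the cumulative distribution function of the standard Gaussian distribution. -/

import Mathlib

open MeasureTheory ProbabilityTheory Real

/-- The cumulative distribution function `Φ` of the standard Gaussian distribution. -/
noncomputable def stdGaussianCDF (z : ℝ) : ℝ := (gaussianReal 0 1 (Set.Iic z)).toReal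

lemma varNN_ne_zero {σ : ℝ} (hσ : 0 < σ) : Real.toNNReal (σ ^ 2) ≠ 0 := by
  rw [Ne, Real.toNNReal_eq_zero, not_le]
  positivity

lemma gauss_map (m σ : ℝ) (hσ : 0 < σ) :
    gaussianReal m (Real.toNNReal (σ ^ 2))
      = Measure.map (fun x => σ * x + m) (gaussianReal 0 1) := by
  have h1 : Measure.map (σ * ·) (gaussianReal 0 1)
      = gaussianReal 0 (Real.toNNReal (σ ^ 2)) := by
    rw [gaussianReal_map_const_mul]
    congr 1
    · simp
    · ext
      simp [Real.coe_toNNReal _ (sq_nonneg σ)]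
  have h2 : (fun x => σ * x + m) = (· + m) ∘ (σ * ·) := rfl
  rw [h2, ← Measure.map_map (measurable_add_const m) (measurable_const_mul σ), h1,
    gaussianReal_map_add_const, zero_add]

lemma gauss_Iic (m σ : ℝ) (hσ : 0 < σ) (z : ℝ) :
    ((gaussianReal m (Real.toNNReal (σ ^ 2))) (Set.Iic z)).toReal
      = stdGaussianCDF ((z - m) / σ) := by
  rw [gauss_map m σ hσ, Measure.map_apply (by fun_prop) measurableSet_Iic]
  have h : (fun x => σ * x + m) ⁻¹' Set.Iic z = Set.Iic ((z - m) / σ) := by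
    ext x
    simp only [Set.mem_preimage, Set.mem_Iic]
    rw [le_div_iff₀ hσ]
    constructor <;> intro h <;> nlinarith
  rw [h]
  rfl

lemma stdGaussianCDF_neg (s : ℝ) : stdGaussianCDF (-s) = 1 - stdGaussianCDF s := by
  have hone : (⟨(-1 : ℝ) ^ 2, sq_nonneg _⟩ : NNReal) * 1 = 1 := by
    ext; norm_num
  have hmap : Measure.map ((-1 : ℝ) * ·) (gaussianReal 0 1) = gaussianReal 0 1 := by
    rw [gaussianReal_map_const_mul]
    congr 1
    · norm_num
  have hsing : gaussianReal 0 1 {s} = 0 :=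
    (gaussianReal_absolutelyContinuous 0 one_ne_zero) (measure_singleton s)
  have h1 : gaussianReal 0 1 (Set.Iic (-s)) = gaussianReal 0 1 (Set.Ici s) := by
    conv_lhs => rw [← hmap]
    rw [Measure.map_apply (by fun_prop) measurableSet_Iic]
    congr 1
    ext x
    simp only [Set.mem_preimage, Set.mem_Iic, Set.mem_Ici]
    constructor <;> intro h <;> linarith
  have h2 : gaussianReal 0 1 (Set.Ici s) = 1 - gaussianReal 0 1 (Set.Iio s) := by
    rw [← Set.compl_Iio, measure_compl measurableSet_Iio (measure_ne_top _ _), measure_univ]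
  have h3 : gaussianReal 0 1 (Set.Iio s) = gaussianReal 0 1 (Set.Iic s) :=
    measure_congr (Iio_ae_eq_Iic' hsing)
  rw [stdGaussianCDF, stdGaussianCDF, h1, h2, h3,
    ENNReal.toReal_sub_of_le prob_le_one ENNReal.one_ne_top, ENNReal.toReal_one]

lemma gauss_Ioi (m σ : ℝ) (hσ : 0 < σ) (z : ℝ) :
    ((gaussianReal m (Real.toNNReal (σ ^ 2))) (Set.Ioi z)).toReal
      = stdGaussianCDF ((m - z) / σ) := by
  have h : Set.Ioi z = (Set.Iic z)ᶜ := Set.compl_Iic.symm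
  rw [h, measure_compl measurableSet_Iic (measure_ne_top _ _), measure_univ,
    ENNReal.toReal_sub_of_le prob_le_one ENNReal.one_ne_top, ENNReal.toReal_one,
    gauss_Iic m σ hσ z, show (m - z) / σ = -((z - m) / σ) by ring, stdGaussianCDF_neg]

lemma gauss_Iio (m σ : ℝ) (hσ : 0 < σ) (z : ℝ) :
    ((gaussianReal m (Real.toNNReal (σ ^ 2))) (Set.Iio z)).toReal
      = stdGaussianCDF ((z - m) / σ) := by
  have hsing : gaussianReal m (Real.toNNReal (σ ^ 2)) {z} = 0 :=
    (gaussianReal_absolutelyContinuous m (varNN_ne_zero hσ)) (measure_singleton z)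
  rw [measure_congr (Iio_ae_eq_Iic' hsing), gauss_Iic m σ hσ z]

lemma setIntegral_le_posSet {g : ℝ → ℝ} (hg : Integrable g) (hgm : Measurable g)
    {S : Set ℝ} (hS : MeasurableSet S) :
    ∫ x in S, g x ≤ ∫ x in {x | 0 < g x}, g x := by
  have hT : MeasurableSet {x | 0 < g x} := measurableSet_lt measurable_const hgm
  have h1 : ∫ x in S, g x
      = (∫ x in S ∩ {x | 0 < g x}, g x) + ∫ x in S \ {x | 0 < g x}, g x :=
    (integral_inter_add_diff hT hg.integrableOn).symm
  have h2 : ∫ x in S \ {x | 0 < g x}, g x ≤ 0 :=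
    setIntegral_nonpos (hS.diff hT) fun x hx => not_lt.mp hx.2
  have h3 : ∫ x in S ∩ {x | 0 < g x}, g x ≤ ∫ x in {x | 0 < g x}, g x :=
    setIntegral_mono_set hg.integrableOn
      ((ae_restrict_mem hT).mono fun x hx => le_of_lt hx)
      (HasSubset.Subset.eventuallyLE Set.inter_subset_right)
  linarith

lemma ratio_iff (μ μ' σ ε : ℝ) (hσ : 0 < σ) (x : ℝ) :
    0 < gaussianPDFReal μ (Real.toNNReal (σ ^ 2)) x
        - Real.exp ε * gaussianPDFReal μ' (Real.toNNReal (σ ^ 2)) x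
      ↔ 2 * σ ^ 2 * ε < (μ - μ') * (2 * x - μ - μ') := by
  have hc : ((Real.toNNReal (σ ^ 2) : NNReal) : ℝ) = σ ^ 2 :=
    Real.coe_toNNReal _ (sq_nonneg σ)
  rw [sub_pos]
  simp only [gaussianPDFReal, hc]
  have hπ := Real.pi_pos
  have hC : 0 < (Real.sqrt (2 * π * σ ^ 2))⁻¹ := by positivity
  rw [show rexp ε * ((Real.sqrt (2 * π * σ ^ 2))⁻¹ * rexp (-(x - μ') ^ 2 / (2 * σ ^ 2)))
      = (Real.sqrt (2 * π * σ ^ 2))⁻¹ * rexp (ε + -(x - μ') ^ 2 / (2 * σ ^ 2)) by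
        rw [Real.exp_add]; ring]
  rw [mul_lt_mul_iff_right₀ hC, Real.exp_lt_exp]
  have h2 : (0 : ℝ) < 2 * σ ^ 2 := by positivity
  rw [← mul_lt_mul_iff_left₀ h2]
  have e1 : (ε + -(x - μ') ^ 2 / (2 * σ ^ 2)) * (2 * σ ^ 2)
      = 2 * σ ^ 2 * ε - (x - μ') ^ 2 := by field_simp; ring
  have e2 : (-(x - μ) ^ 2 / (2 * σ ^ 2)) * (2 * σ ^ 2) = -(x - μ) ^ 2 := by field_simp
  rw [e1, e2]
  constructor <;> intro h <;> nlinarith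

/-- For two one-dimensional Gaussians `N(μ, σ²)` and `N(μ', σ²)` with
`Δ = |μ − μ'| > 0`, the supremum over measurable sets `S ⊆ ℝ` of
`γ_μ(S) − e^ε γ_{μ'}(S)` equals `Φ(Δ/(2σ) − εσ/Δ) − e^ε Φ(−Δ/(2σ) − εσ/Δ)`. -/
theorem gaussian_tight_delta
    (μ μ' σ ε Δ : ℝ) (hσ : 0 < σ) (hε : 0 ≤ ε)
    (hΔ : Δ = |μ - μ'|) (hΔpos : 0 < Δ) :
    (⨆ S : {S : Set ℝ // MeasurableSet S},
        ((gaussianReal μ (Real.toNNReal (σ ^ 2))) S.1).toReal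
          - Real.exp ε * ((gaussianReal μ' (Real.toNNReal (σ ^ 2))) S.1).toReal)
      = stdGaussianCDF (Δ / (2 * σ) - ε * σ / Δ)
        - Real.exp ε * stdGaussianCDF (-Δ / (2 * σ) - ε * σ / Δ) := by
  haveI : Nonempty {S : Set ℝ // MeasurableSet S} := ⟨⟨∅, MeasurableSet.empty⟩⟩
  set v := Real.toNNReal (σ ^ 2) with hvdef
  have hv : v ≠ 0 := varNN_ne_zero hσ
  set g : ℝ → ℝ := fun x => gaussianPDFReal μ v x - rexp ε * gaussianPDFReal μ' v x with hgdef
  have hg : Integrable g :=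
    (integrable_gaussianPDFReal μ v).sub ((integrable_gaussianPDFReal μ' v).const_mul (rexp ε))
  have hgm : Measurable g :=
    (measurable_gaussianPDFReal μ v).sub ((measurable_gaussianPDFReal μ' v).const_mul (rexp ε))
  set T : Set ℝ := {x | 0 < g x} with hTdef
  have hT : MeasurableSet T := measurableSet_lt measurable_const hgm
  -- integral representation
  have hrep : ∀ S : Set ℝ, MeasurableSet S →
      ((gaussianReal μ v) S).toReal - rexp ε * ((gaussianReal μ' v) S).toReal
        = ∫ x in S, g x := by
    intro S hS
    rw [gaussianReal_apply_eq_integral μ hv S, gaussianReal_apply_eq_integral μ' hv S,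
      ENNReal.toReal_ofReal (setIntegral_nonneg hS fun x _ => gaussianPDFReal_nonneg _ _ _),
      ENNReal.toReal_ofReal (setIntegral_nonneg hS fun x _ => gaussianPDFReal_nonneg _ _ _),
      ← integral_const_mul,
      ← integral_sub (integrable_gaussianPDFReal μ v).integrableOn
        (((integrable_gaussianPDFReal μ' v).const_mul (rexp ε)).integrableOn)]
  have key1 : ∀ S : Set ℝ, MeasurableSet S →
      ((gaussianReal μ v) S).toReal - rexp ε * ((gaussianReal μ' v) S).toReal
        ≤ ((gaussianReal μ v) T).toReal - rexp ε * ((gaussianReal μ' v) T).toReal := by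
    intro S hS
    rw [hrep S hS, hrep T hT]
    exact setIntegral_le_posSet hg hgm hS
  have hΔne : Δ ≠ 0 := hΔpos.ne'
  have hμne : μ - μ' ≠ 0 := by
    intro h
    rw [hΔ, h, abs_zero] at hΔpos
    exact lt_irrefl _ hΔpos
  have key2 : ((gaussianReal μ v) T).toReal - rexp ε * ((gaussianReal μ' v) T).toReal
      = stdGaussianCDF (Δ / (2 * σ) - ε * σ / Δ)
        - rexp ε * stdGaussianCDF (-Δ / (2 * σ) - ε * σ / Δ) := by
    rcases lt_or_gt_of_ne hμne with ha | ha
    · -- μ < μ' : Δ = μ' - μ, T = Iio t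
      have hΔ' : Δ = μ' - μ := by rw [hΔ, abs_of_neg ha]; ring
      obtain ⟨t, htdef⟩ : ∃ t : ℝ, t = (μ + μ') / 2 - σ ^ 2 * ε / Δ := ⟨_, rfl⟩
      have hkey : Δ * t = Δ * (μ + μ') / 2 - σ ^ 2 * ε := by
        rw [htdef]; field_simp
      have hTeq : T = Set.Iio t := by
        ext x
        rw [hTdef, Set.mem_setOf_eq, hgdef]
        rw [ratio_iff μ μ' σ ε hσ x, Set.mem_Iio]
        rw [show μ - μ' = -Δ by rw [hΔ']; ring]
        constructor <;> intro h
        · by_contra hc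
          push_neg at hc
          nlinarith [mul_le_mul_of_nonneg_left hc hΔpos.le]
        · nlinarith [mul_lt_mul_of_pos_left h hΔpos]
      rw [hTeq, gauss_Iio μ σ hσ t, gauss_Iio μ' σ hσ t,
        show (t - μ) / σ = Δ / (2 * σ) - ε * σ / Δ by
          rw [htdef]; field_simp; rw [hΔ']; ring,
        show (t - μ') / σ = -Δ / (2 * σ) - ε * σ / Δ by
          rw [htdef]; field_simp; rw [hΔ']; ring]
    · -- μ' < μ : Δ = μ - μ', T = Ioi t
      have hΔ' : Δ = μ - μ' := by rw [hΔ, abs_of_pos ha]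
      obtain ⟨t, htdef⟩ : ∃ t : ℝ, t = (μ + μ') / 2 + σ ^ 2 * ε / Δ := ⟨_, rfl⟩
      have hkey : Δ * t = Δ * (μ + μ') / 2 + σ ^ 2 * ε := by
        rw [htdef]; field_simp
      have hTeq : T = Set.Ioi t := by
        ext x
        rw [hTdef, Set.mem_setOf_eq, hgdef]
        rw [ratio_iff μ μ' σ ε hσ x, Set.mem_Ioi]
        rw [show μ - μ' = Δ from hΔ'.symm]
        constructor <;> intro h
        · by_contra hc
          push_neg at hc
          nlinarith [mul_le_mul_of_nonneg_left hc hΔpos.le]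
        · nlinarith [mul_lt_mul_of_pos_left h hΔpos]
      rw [hTeq, gauss_Ioi μ σ hσ t, gauss_Ioi μ' σ hσ t,
        show (μ - t) / σ = Δ / (2 * σ) - ε * σ / Δ by
          rw [htdef, hΔ']; field_simp; ring,
        show (μ' - t) / σ = -Δ / (2 * σ) - ε * σ / Δ by
          rw [htdef, hΔ']; field_simp; ring]
  refine le_antisymm (ciSup_le fun S => (key1 S.1 S.2).trans_eq key2) ?_
  have hb : BddAbove (Set.range fun S : {S : Set ℝ // MeasurableSet S} =>
      ((gaussianReal μ v) S.1).toReal - rexp ε * ((gaussianReal μ' v) S.1).toReal) := by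
    refine ⟨((gaussianReal μ v) T).toReal - rexp ε * ((gaussianReal μ' v) T).toReal, ?_⟩
    rintro y ⟨S, rfl⟩
    exact key1 S.1 S.2
  calc stdGaussianCDF (Δ / (2 * σ) - ε * σ / Δ)
        - rexp ε * stdGaussianCDF (-Δ / (2 * σ) - ε * σ / Δ)
      = ((gaussianReal μ v) T).toReal - rexp ε * ((gaussianReal μ' v) T).toReal := key2.symm
    _ ≤ _ := le_ciSup hb ⟨T, hT⟩
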